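/- For any β ∈ ℂ, μ ∈ ℝ, and n ∈ ℕ: ∑_{m=0}^∞ e^{2μ(m−n)} |⟨m| D(β) |n⟩|² = e^{(e^{2μ}−1)|β|²} · L_n(−|β|²(e^{μ} − e^{−μ})²), where L_n is the n-th Laguerre polynomial L_n(x) = ∑_{k=0}^n (1/k!) · C(n,k) · (−x)^k. -/

import Mathlib

/-- The n-th Laguerre polynomial, L_n(x) = ∑_{k=0}^n (1/k!)·C(n,k)·(−x)^k. -/
noncomputable def laguerre (n : ℕ) (x : ℝ) : ℝ :=
  ∑ k ∈ Finset.range (n + 1), (1 / (Nat.factorial k : ℝ)) * (Nat.choose n k : ℝ) * (-x) ^ k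

/-- Matrix elements ⟨m|D(β)|n⟩ of the Glauber displacement operator
D(β) = exp(β b† − β* b) = e^{−|β|²/2} e^{β b†} e^{−β* b} on ℓ²(ℕ), given by the
standard explicit expansion. -/
noncomputable def Dmat (β : ℂ) (m n : ℕ) : ℂ :=
  Complex.exp (-(((‖β‖ : ℝ) : ℂ) ^ 2) / 2) *
    ∑ k ∈ Finset.range (n + 1),
      if n - k ≤ m then
        ((-(starRingEnd ℂ) β) ^ k / (Nat.factorial k : ℂ)) *
          (β ^ (m - (n - k)) / (Nat.factorial (m - (n - k)) : ℂ)) *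
          ((Real.sqrt ((Nat.factorial n : ℝ) * (Nat.factorial m : ℝ)) /
            (Nat.factorial (n - k) : ℝ) : ℝ) : ℂ)
      else 0

namespace StmtAux

open Finset

/-! ### Exponential series helpers -/

lemma exp_tsum (x : ℝ) : Real.exp x = ∑' m : ℕ, x ^ m / (m.factorial : ℝ) := by
  rw [Real.exp_eq_exp_ℝ, NormedSpace.exp_eq_tsum_div]

noncomputable def gfun (x : ℝ) (s : ℕ) : ℕ → ℝ :=
  fun m => if s ≤ m then x ^ m / ((m - s).factorial : ℝ) else 0

lemma summable_gfun (x : ℝ) (s : ℕ) : Summable (gfun x s) := by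
  rw [← summable_nat_add_iff s]
  have : (fun m => gfun x s (m + s)) = fun m => x ^ s * (x ^ m / (m.factorial : ℝ)) := by
    funext m
    simp only [gfun, Nat.le_add_left, if_pos, Nat.add_sub_cancel]
    rw [pow_add]; ring
  rw [this]
  exact (Real.summable_pow_div_factorial x).mul_left _

lemma tsum_gfun (x : ℝ) (s : ℕ) : ∑' m, gfun x s m = x ^ s * Real.exp x := by
  rw [← Summable.sum_add_tsum_nat_add s (summable_gfun x s)]
  have h0 : ∑ m ∈ range s, gfun x s m = 0 := by
    apply Finset.sum_eq_zero
    intro m hm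
    simp only [mem_range] at hm
    simp [gfun, Nat.not_le.mpr hm]
  rw [h0, zero_add]
  have : (fun m => gfun x s (m + s)) = fun m => x ^ s * (x ^ m / (m.factorial : ℝ)) := by
    funext m
    simp only [gfun, Nat.le_add_left, if_pos, Nat.add_sub_cancel]
    rw [pow_add]; ring
  rw [this, tsum_mul_left, exp_tsum x]

/-! ### Binomial identities -/

lemma binom_sum (c : ℝ) (N : ℕ) :
    ∑ t ∈ range (N + 1), c ^ t / ((t.factorial : ℝ) * (N - t).factorial)
      = (1 + c) ^ N / N.factorial := by
  rw [eq_div_iff (by exact_mod_cast N.factorial_ne_zero), Finset.sum_mul]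
  have : (1 + c) ^ N = (c + 1) ^ N := by ring_nf
  rw [this, add_pow]
  apply Finset.sum_congr rfl
  intro t ht
  simp only [mem_range, Nat.lt_succ_iff] at ht
  rw [Nat.cast_choose ℝ ht]
  have h1 : (t.factorial : ℝ) ≠ 0 := by exact_mod_cast t.factorial_ne_zero
  have h2 : ((N - t).factorial : ℝ) ≠ 0 := by exact_mod_cast (N - t).factorial_ne_zero
  field_simp
  rw [one_pow, mul_one]

lemma G_sum (c : ℝ) (n i : ℕ) (hi : i ≤ n) :
    ∑ j ∈ range (n + 1), (if i ≤ j then c ^ j / (((n - j).factorial : ℝ) * (j - i).factorial) else 0)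
      = c ^ i * (1 + c) ^ (n - i) / (n - i).factorial := by
  rw [← Finset.sum_filter]
  have hf : (range (n + 1)).filter (fun j => i ≤ j) = Finset.Ico i (n + 1) := by
    ext j; simp [Nat.lt_succ_iff, and_comm]
  rw [hf, Finset.sum_Ico_eq_sum_range]
  have hn : n + 1 - i = (n - i) + 1 := by omega
  rw [hn]
  have : ∀ t ∈ range ((n - i) + 1),
      c ^ (i + t) / (((n - (i + t)).factorial : ℝ) * (i + t - i).factorial)
        = c ^ i * (c ^ t / ((t.factorial : ℝ) * ((n - i) - t).factorial)) := by
    intro t ht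
    simp only [mem_range, Nat.lt_succ_iff] at ht
    have h1 : n - (i + t) = (n - i) - t := by omega
    have h2 : i + t - i = t := by omega
    rw [h1, h2, pow_add]
    ring_nf
  rw [Finset.sum_congr rfl this, ← Finset.mul_sum, binom_sum]
  ring

lemma vander (j j' m : ℕ) (hj : j ≤ m) (_hj' : j' ≤ m) :
    ∑ i ∈ range (j' + 1), j.choose i * (m - j).choose (j' - i) = m.choose j' := by
  have h := Nat.add_choose_eq j (m - j) j'
  rw [Nat.add_sub_cancel' hj] at h
  rw [h, Finset.Nat.sum_antidiagonal_eq_sum_range_succ_mk]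

/-! ### The weighted series `Ft` and its closed form -/

noncomputable def Ft (x : ℝ) (j j' : ℕ) : ℕ → ℝ :=
  fun m => if j ≤ m ∧ j' ≤ m then
    (m.factorial : ℝ) * x ^ m / ((m - j).factorial * (m - j').factorial) else 0

lemma Ft_eq (x : ℝ) (j j' m : ℕ) :
    Ft x j j' m = ∑ i ∈ range (min j j' + 1),
      ((j.factorial * j'.factorial : ℝ) / (i.factorial * (j - i).factorial * (j' - i).factorial))
        * gfun x (j + j' - i) m := by
  by_cases h : j ≤ m ∧ j' ≤ m
  · obtain ⟨hj, hj'⟩ := h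
    have hterm : ∀ i ∈ range (min j j' + 1),
        ((j.factorial * j'.factorial : ℝ) / (i.factorial * (j - i).factorial * (j' - i).factorial))
          * gfun x (j + j' - i) m
        = (j'.factorial : ℝ) / (m - j).factorial
            * (j.choose i * (m - j).choose (j' - i) : ℕ) * x ^ m := by
      intro i hi
      simp only [mem_range, Nat.lt_succ_iff, le_min_iff] at hi
      obtain ⟨hij, hij'⟩ := hi
      by_cases hc : j + j' - i ≤ m
      · have hcc : j' - i ≤ m - j := by omega
        simp only [gfun, if_pos hc]
        rw [Nat.cast_mul, Nat.cast_choose ℝ hij, Nat.cast_choose ℝ hcc]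
        have he : m - j - (j' - i) = m - (j + j' - i) := by omega
        rw [he]
        have n1 : (i.factorial : ℝ) ≠ 0 := by exact_mod_cast i.factorial_ne_zero
        have n2 : ((j - i).factorial : ℝ) ≠ 0 := by exact_mod_cast (j - i).factorial_ne_zero
        have n3 : ((j' - i).factorial : ℝ) ≠ 0 := by exact_mod_cast (j' - i).factorial_ne_zero
        have n4 : ((m - j).factorial : ℝ) ≠ 0 := by exact_mod_cast (m - j).factorial_ne_zero
        have n5 : ((m - (j + j' - i)).factorial : ℝ) ≠ 0 := by
          exact_mod_cast (m - (j + j' - i)).factorial_ne_zero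
        field_simp
      · have hz : (m - j).choose (j' - i) = 0 := Nat.choose_eq_zero_of_lt (by omega)
        simp [gfun, if_neg hc, hz]
        intro hcon
        exact absurd hcon (by omega)
    rw [Finset.sum_congr rfl hterm]
    rw [← Finset.sum_mul, ← Finset.mul_sum]
    have hext : ∑ i ∈ range (min j j' + 1), ((j.choose i * (m - j).choose (j' - i) : ℕ) : ℝ)
        = ∑ i ∈ range (j' + 1), ((j.choose i * (m - j).choose (j' - i) : ℕ) : ℝ) := by
      apply Finset.sum_subset
      · apply Finset.range_subset_range.mpr; omega
      · intro i hi hni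
        simp only [mem_range, Nat.lt_succ_iff] at hi hni
        have : j < i := by omega
        simp [Nat.choose_eq_zero_of_lt this]
    rw [hext, ← Nat.cast_sum, vander j j' m hj hj']
    simp only [Ft, if_pos (And.intro hj hj')]
    rw [Nat.cast_choose ℝ hj']
    have n4 : ((m - j).factorial : ℝ) ≠ 0 := by exact_mod_cast (m - j).factorial_ne_zero
    have n5 : ((m - j').factorial : ℝ) ≠ 0 := by exact_mod_cast (m - j').factorial_ne_zero
    have n6 : (j'.factorial : ℝ) ≠ 0 := by exact_mod_cast j'.factorial_ne_zero
    field_simp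
  · simp only [Ft, if_neg h]
    symm
    apply Finset.sum_eq_zero
    intro i hi
    simp only [mem_range, Nat.lt_succ_iff, le_min_iff] at hi
    have : ¬ (j + j' - i ≤ m) := by omega
    simp [gfun, this]

lemma summable_Ft (x : ℝ) (j j' : ℕ) : Summable (Ft x j j') := by
  have : Ft x j j' = fun m => ∑ i ∈ range (min j j' + 1),
      ((j.factorial * j'.factorial : ℝ) / (i.factorial * (j - i).factorial * (j' - i).factorial))
        * gfun x (j + j' - i) m := funext (Ft_eq x j j')
  rw [this]
  apply summable_sum
  intro i _
  exact (summable_gfun x (j + j' - i)).mul_left _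

lemma tsum_Ft (x : ℝ) (j j' : ℕ) :
    ∑' m, Ft x j j' m = Real.exp x * ∑ i ∈ range (min j j' + 1),
      ((j.factorial * j'.factorial : ℝ) / (i.factorial * (j - i).factorial * (j' - i).factorial))
        * x ^ (j + j' - i) := by
  have h1 : ∀ m : ℕ, Ft x j j' m = ∑ i ∈ range (min j j' + 1),
      ((j.factorial * j'.factorial : ℝ) / (i.factorial * (j - i).factorial * (j' - i).factorial))
        * gfun x (j + j' - i) m := Ft_eq x j j'
  rw [tsum_congr h1]
  rw [Summable.tsum_finsetSum (fun i _ => (summable_gfun x (j + j' - i)).mul_left _)]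
  rw [Finset.mul_sum]
  apply Finset.sum_congr rfl
  intro i _
  rw [tsum_mul_left, tsum_gfun]
  ring

/-! ### Rewriting `Dmat` and its squared modulus -/

lemma Dmat_eq (β : ℂ) (m n : ℕ) :
    Dmat β m n = Complex.exp (-(((‖β‖ : ℝ) : ℂ) ^ 2) / 2) *
      ∑ j ∈ range (n + 1), (if j ≤ m then
        ((-(starRingEnd ℂ) β) ^ (n - j) * β ^ (m - j)) *
          ((Real.sqrt ((n.factorial : ℝ) * m.factorial) /
            ((n - j).factorial * ((m - j).factorial * j.factorial)) : ℝ) : ℂ)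
      else 0) := by
  unfold Dmat
  congr 1
  rw [← Finset.sum_range_reflect]
  apply Finset.sum_congr rfl
  intro j hj
  simp only [mem_range, Nat.lt_succ_iff] at hj
  have h0 : n + 1 - 1 - j = n - j := by omega
  have h1 : n - (n - j) = j := Nat.sub_sub_self hj
  rw [h0, h1]
  by_cases hc : j ≤ m
  · rw [if_pos hc, if_pos hc]
    have e1 : ((n - j).factorial : ℝ) ≠ 0 := by exact_mod_cast (n - j).factorial_ne_zero
    have e2 : ((m - j).factorial : ℝ) ≠ 0 := by exact_mod_cast (m - j).factorial_ne_zero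
    have e3 : (j.factorial : ℝ) ≠ 0 := by exact_mod_cast j.factorial_ne_zero
    push_cast
    field_simp
  · rw [if_neg hc, if_neg hc]

lemma neg_one_pow_flip {n j j' : ℕ} (hj : j ≤ n) (hj' : j' ≤ n) :
    ((-1 : ℂ)) ^ ((n - j) + (n - j')) = (-1) ^ (j + j') := by
  have h1 : ((-1 : ℂ)) ^ (j + j') * (-1) ^ (j + j') = 1 := by
    rw [← pow_add, ← two_mul, pow_mul]; norm_num
  have h2 : ((-1 : ℂ)) ^ ((n - j) + (n - j')) * (-1) ^ (j + j') = 1 := by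
    rw [← pow_add]
    have h3 : (n - j) + (n - j') + (j + j') = 2 * n := by omega
    rw [h3, pow_mul]; norm_num
  calc ((-1 : ℂ)) ^ ((n - j) + (n - j'))
      = (-1) ^ ((n - j) + (n - j')) * ((-1) ^ (j + j') * (-1) ^ (j + j')) := by rw [h1, mul_one]
    _ = ((-1) ^ ((n - j) + (n - j')) * (-1) ^ (j + j')) * (-1) ^ (j + j') := by ring
    _ = (-1) ^ (j + j') := by rw [h2, one_mul]

lemma sq_abs_Dmat (β : ℂ) (m n : ℕ) :
    ‖Dmat β m n‖ ^ 2 = Real.exp (-(‖β‖ ^ 2)) *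
      ∑ j ∈ range (n + 1), ∑ j' ∈ range (n + 1),
        (if j ≤ m ∧ j' ≤ m then
          (-1 : ℝ) ^ (j + j') * (‖β‖ ^ 2) ^ (m + n - j - j') *
            ((n.factorial : ℝ) * m.factorial) /
            ((n - j).factorial * ((m - j).factorial * (j.factorial *
              ((n - j').factorial * ((m - j').factorial * j'.factorial)))))
        else 0) := by
  rw [Dmat_eq]
  rw [norm_mul, mul_pow]
  have hw : -(((‖β‖ : ℝ) : ℂ) ^ 2) / 2 = ((-(‖β‖ ^ 2) / 2 : ℝ) : ℂ) := by
    push_cast; ring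
  rw [hw, Complex.norm_exp_ofReal]
  have hexp : Real.exp (-(‖β‖ ^ 2) / 2) ^ 2 = Real.exp (-(‖β‖ ^ 2)) := by
    rw [sq, ← Real.exp_add]; ring_nf
  rw [hexp]
  congr 1
  rw [Complex.sq_norm]
  set S := ∑ j ∈ range (n + 1), (if j ≤ m then
        ((-(starRingEnd ℂ) β) ^ (n - j) * β ^ (m - j)) *
          ((Real.sqrt ((n.factorial : ℝ) * m.factorial) /
            ((n - j).factorial * ((m - j).factorial * j.factorial)) : ℝ) : ℂ)
      else 0) with hS
  have key : S * (starRingEnd ℂ) S = ((∑ j ∈ range (n + 1), ∑ j' ∈ range (n + 1),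
        (if j ≤ m ∧ j' ≤ m then
          (-1 : ℝ) ^ (j + j') * (‖β‖ ^ 2) ^ (m + n - j - j') *
            ((n.factorial : ℝ) * m.factorial) /
            ((n - j).factorial * ((m - j).factorial * (j.factorial *
              ((n - j').factorial * ((m - j').factorial * j'.factorial)))))
        else 0) : ℝ) : ℂ) := by
    rw [hS, map_sum, Finset.sum_mul_sum, Complex.ofReal_sum]
    apply Finset.sum_congr rfl
    intro j hj
    rw [Complex.ofReal_sum]
    apply Finset.sum_congr rfl
    intro j' hj'
    rw [apply_ite (fun r : ℝ => (r : ℂ)), Complex.ofReal_zero]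
    simp only [mem_range, Nat.lt_succ_iff] at hj hj'
    by_cases h1 : j ≤ m
    · by_cases h2 : j' ≤ m
      · rw [if_pos h1, if_pos h2, if_pos (And.intro h1 h2)]
        rw [map_mul, map_mul, map_pow, map_pow, map_neg, Complex.conj_conj,
          Complex.conj_ofReal]
        have ha : (n - j) + (m - j') = m + n - j - j' := by omega
        have hb : (m - j) + (n - j') = m + n - j - j' := by omega
        have hsq : Real.sqrt ((n.factorial : ℝ) * m.factorial) *
            Real.sqrt ((n.factorial : ℝ) * m.factorial) = (n.factorial : ℝ) * m.factorial :=
          Real.mul_self_sqrt (by positivity)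
        calc ((-(starRingEnd ℂ) β) ^ (n - j) * β ^ (m - j) *
                ((Real.sqrt ((n.factorial : ℝ) * m.factorial) /
                  ((n - j).factorial * ((m - j).factorial * j.factorial)) : ℝ) : ℂ)) *
              ((-β) ^ (n - j') * ((starRingEnd ℂ) β) ^ (m - j') *
                ((Real.sqrt ((n.factorial : ℝ) * m.factorial) /
                  ((n - j').factorial * ((m - j').factorial * j'.factorial)) : ℝ) : ℂ))
            = ((-1 : ℂ) ^ ((n - j) + (n - j'))) *
                (((starRingEnd ℂ) β) ^ ((n - j) + (m - j')) * β ^ ((m - j) + (n - j'))) *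
                ((((Real.sqrt ((n.factorial : ℝ) * m.factorial) *
                    Real.sqrt ((n.factorial : ℝ) * m.factorial)) /
                  (((n - j).factorial * ((m - j).factorial * j.factorial)) *
                    ((n - j').factorial * ((m - j').factorial * j'.factorial))) : ℝ)) : ℂ) := by
              rw [neg_pow ((starRingEnd ℂ) β), neg_pow β]
              push_cast
              rw [pow_add, pow_add, pow_add]
              ring
          _ = ((-1 : ℂ) ^ (j + j')) *
                ((((starRingEnd ℂ) β) * β) ^ (m + n - j - j')) *
                ((((n.factorial : ℝ) * m.factorial) /
                  (((n - j).factorial * ((m - j).factorial * j.factorial)) *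
                    ((n - j').factorial * ((m - j').factorial * j'.factorial))) : ℂ)) := by
              rw [neg_one_pow_flip hj hj', ha, hb, mul_pow, hsq]
              push_cast
              ring
          _ = _ := by
              have hc : ((starRingEnd ℂ) β) * β = ((‖β‖ ^ 2 : ℝ) : ℂ) := by
                rw [mul_comm, Complex.mul_conj, Complex.sq_norm]
              rw [hc]
              push_cast
              ring
      · rw [if_neg h2, if_neg (by tauto : ¬ (j ≤ m ∧ j' ≤ m)), map_zero, mul_zero]
    · rw [if_neg h1, if_neg (by tauto : ¬ (j ≤ m ∧ j' ≤ m)), zero_mul]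
  rw [Complex.mul_conj] at key
  exact_mod_cast key

/-! ### The coefficient `Kc` and the summand identity -/

noncomputable def Kc (R q : ℝ) (n j j' : ℕ) : ℝ :=
  Real.exp (-R) * (R ^ n / q ^ n) * ((-1 : ℝ) ^ (j + j') * (n.factorial : ℝ) /
    ((n - j).factorial * (j.factorial * ((n - j').factorial * (j'.factorial * R ^ (j + j'))))))

lemma summand_eq (β : ℂ) (hβ : β ≠ 0) (μ : ℝ) (n m : ℕ) :
    Real.exp (2 * μ * ((m : ℝ) - (n : ℝ))) * ‖Dmat β m n‖ ^ 2
      = ∑ j ∈ range (n + 1), ∑ j' ∈ range (n + 1),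
          Kc (‖β‖ ^ 2) (Real.exp (2 * μ)) n j j' *
            Ft (Real.exp (2 * μ) * ‖β‖ ^ 2) j j' m := by
  set R := ‖β‖ ^ 2 with hRdef
  set q := Real.exp (2 * μ) with hqdef
  have hR : 0 < R := by
    have : 0 < ‖β‖ := norm_pos_iff.mpr hβ
    positivity
  have hq : 0 < q := Real.exp_pos _
  have hqe : Real.exp (2 * μ * ((m : ℝ) - n)) = q ^ m / q ^ n := by
    rw [hqdef, ← Real.exp_nat_mul, ← Real.exp_nat_mul, ← Real.exp_sub]
    congr 1; ring
  rw [sq_abs_Dmat, hqe, ← mul_assoc, Finset.mul_sum]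
  apply Finset.sum_congr rfl
  intro j hj
  rw [Finset.mul_sum]
  apply Finset.sum_congr rfl
  intro j' hj'
  simp only [mem_range, Nat.lt_succ_iff] at hj hj'
  by_cases h : j ≤ m ∧ j' ≤ m
  · rw [if_pos h]
    obtain ⟨h1, h2⟩ := h
    simp only [Ft, Kc, if_pos (And.intro h1 h2)]
    have hpw : R ^ (m + n - j - j') = R ^ m * R ^ n / R ^ (j + j') := by
      rw [eq_div_iff (by positivity), ← pow_add, ← pow_add]
      congr 1; omega
    rw [hpw]
    have f1 : ((n - j).factorial : ℝ) ≠ 0 := by exact_mod_cast (n - j).factorial_ne_zero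
    have f2 : ((m - j).factorial : ℝ) ≠ 0 := by exact_mod_cast (m - j).factorial_ne_zero
    have f3 : (j.factorial : ℝ) ≠ 0 := by exact_mod_cast j.factorial_ne_zero
    have f4 : ((n - j').factorial : ℝ) ≠ 0 := by exact_mod_cast (n - j').factorial_ne_zero
    have f5 : ((m - j').factorial : ℝ) ≠ 0 := by exact_mod_cast (m - j').factorial_ne_zero
    have f6 : (j'.factorial : ℝ) ≠ 0 := by exact_mod_cast j'.factorial_ne_zero
    have hRne : R ≠ 0 := ne_of_gt hR
    have hqne : q ≠ 0 := ne_of_gt hq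
    rw [mul_pow]
    field_simp
    ring
  · simp only [Ft, Kc, if_neg h, mul_zero]

/-! ### The finite-sum computation -/

lemma per_jj (R q : ℝ) (hR : 0 < R) (hq : 0 < q) (n j j' : ℕ) (hj : j ≤ n) (_hj' : j' ≤ n) :
    Kc R q n j j' * (Real.exp (q * R) * ∑ i ∈ range (min j j' + 1),
        ((j.factorial * j'.factorial : ℝ) / (i.factorial * (j - i).factorial * (j' - i).factorial))
          * (q * R) ^ (j + j' - i))
      = (Real.exp (-R) * Real.exp (q * R) * (R ^ n / q ^ n) * n.factorial) *
          ∑ i ∈ range (n + 1), (if i ≤ j ∧ i ≤ j' then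
            (1 / ((i.factorial : ℝ) * (q * R) ^ i)) *
              ((-q) ^ j / (((n - j).factorial : ℝ) * (j - i).factorial)) *
              ((-q) ^ j' / (((n - j').factorial : ℝ) * (j' - i).factorial)) else 0) := by
  have hrestrict : ∑ i ∈ range (n + 1), (if i ≤ j ∧ i ≤ j' then
            (1 / ((i.factorial : ℝ) * (q * R) ^ i)) *
              ((-q) ^ j / (((n - j).factorial : ℝ) * (j - i).factorial)) *
              ((-q) ^ j' / (((n - j').factorial : ℝ) * (j' - i).factorial)) else 0)
      = ∑ i ∈ range (min j j' + 1),
            (1 / ((i.factorial : ℝ) * (q * R) ^ i)) *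
              ((-q) ^ j / (((n - j).factorial : ℝ) * (j - i).factorial)) *
              ((-q) ^ j' / (((n - j').factorial : ℝ) * (j' - i).factorial)) := by
    rw [← Finset.sum_filter]
    apply Finset.sum_congr
    · ext i; simp only [mem_filter, mem_range, Nat.lt_succ_iff, le_min_iff]; omega
    · intro _ _; rfl
  rw [hrestrict]
  simp only [Finset.mul_sum]
  apply Finset.sum_congr rfl
  intro i hi
  simp only [mem_range, Nat.lt_succ_iff, le_min_iff] at hi
  obtain ⟨hij, hij'⟩ := hi
  have hxp : (q * R) ^ (j + j' - i) = (q * R) ^ j * (q * R) ^ j' / (q * R) ^ i := by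
    rw [eq_div_iff (by positivity), ← pow_add, ← pow_add]
    congr 1; omega
  rw [hxp, Kc]
  have f1 : ((n - j).factorial : ℝ) ≠ 0 := by exact_mod_cast (n - j).factorial_ne_zero
  have f2 : ((n - j').factorial : ℝ) ≠ 0 := by exact_mod_cast (n - j').factorial_ne_zero
  have f3 : (j.factorial : ℝ) ≠ 0 := by exact_mod_cast j.factorial_ne_zero
  have f4 : (j'.factorial : ℝ) ≠ 0 := by exact_mod_cast j'.factorial_ne_zero
  have f5 : (i.factorial : ℝ) ≠ 0 := by exact_mod_cast i.factorial_ne_zero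
  have f6 : ((j - i).factorial : ℝ) ≠ 0 := by exact_mod_cast (j - i).factorial_ne_zero
  have f7 : ((j' - i).factorial : ℝ) ≠ 0 := by exact_mod_cast (j' - i).factorial_ne_zero
  have hRne : R ≠ 0 := ne_of_gt hR
  have hqne : q ≠ 0 := ne_of_gt hq
  rw [mul_pow, mul_pow, mul_pow]
  rw [neg_pow q j, neg_pow q j']
  field_simp
  ring

lemma final_sum (R q : ℝ) (hR : 0 < R) (hq : 0 < q) (n : ℕ) :
    ∑ j ∈ range (n + 1), ∑ j' ∈ range (n + 1), Kc R q n j j' *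
        (Real.exp (q * R) * ∑ i ∈ range (min j j' + 1),
          ((j.factorial * j'.factorial : ℝ) / (i.factorial * (j - i).factorial * (j' - i).factorial))
            * (q * R) ^ (j + j' - i))
      = Real.exp ((q - 1) * R) *
          ∑ k ∈ range (n + 1), (1 / (k.factorial : ℝ)) * (n.choose k : ℝ) *
            (R * ((1 + -q) ^ 2 / q)) ^ k := by
  have hRne : R ≠ 0 := ne_of_gt hR
  have hqne : q ≠ 0 := ne_of_gt hq
  have step1 : ∀ j ∈ range (n + 1), ∀ j' ∈ range (n + 1),
      Kc R q n j j' * (Real.exp (q * R) * ∑ i ∈ range (min j j' + 1),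
        ((j.factorial * j'.factorial : ℝ) / (i.factorial * (j - i).factorial * (j' - i).factorial))
          * (q * R) ^ (j + j' - i))
      = (Real.exp (-R) * Real.exp (q * R) * (R ^ n / q ^ n) * n.factorial) *
          ∑ i ∈ range (n + 1), (if i ≤ j ∧ i ≤ j' then
            (1 / ((i.factorial : ℝ) * (q * R) ^ i)) *
              ((-q) ^ j / (((n - j).factorial : ℝ) * (j - i).factorial)) *
              ((-q) ^ j' / (((n - j').factorial : ℝ) * (j' - i).factorial)) else 0) := by
    intro j hj j' hj'
    simp only [mem_range, Nat.lt_succ_iff] at hj hj'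
    exact per_jj R q hR hq n j j' hj hj'
  rw [Finset.sum_congr rfl (fun j hj => Finset.sum_congr rfl (fun j' hj' => step1 j hj j' hj'))]
  simp only [← Finset.mul_sum]
  have swap1 : ∀ j : ℕ, ∑ j' ∈ range (n + 1), ∑ i ∈ range (n + 1), (if i ≤ j ∧ i ≤ j' then
            (1 / ((i.factorial : ℝ) * (q * R) ^ i)) *
              ((-q) ^ j / (((n - j).factorial : ℝ) * (j - i).factorial)) *
              ((-q) ^ j' / (((n - j').factorial : ℝ) * (j' - i).factorial)) else 0)
      = ∑ i ∈ range (n + 1), ∑ j' ∈ range (n + 1), (if i ≤ j ∧ i ≤ j' then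
            (1 / ((i.factorial : ℝ) * (q * R) ^ i)) *
              ((-q) ^ j / (((n - j).factorial : ℝ) * (j - i).factorial)) *
              ((-q) ^ j' / (((n - j').factorial : ℝ) * (j' - i).factorial)) else 0) :=
    fun j => Finset.sum_comm
  rw [Finset.sum_congr rfl (fun j _ => swap1 j), Finset.sum_comm]
  have step3 : ∀ i ∈ range (n + 1), ∑ j ∈ range (n + 1), ∑ j' ∈ range (n + 1),
      (if i ≤ j ∧ i ≤ j' then
            (1 / ((i.factorial : ℝ) * (q * R) ^ i)) *
              ((-q) ^ j / (((n - j).factorial : ℝ) * (j - i).factorial)) *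
              ((-q) ^ j' / (((n - j').factorial : ℝ) * (j' - i).factorial)) else 0)
      = (1 / ((i.factorial : ℝ) * (q * R) ^ i)) *
          ((-q) ^ i * (1 + -q) ^ (n - i) / (n - i).factorial) ^ 2 := by
    intro i hi
    simp only [mem_range, Nat.lt_succ_iff] at hi
    have hpt : ∀ j j' : ℕ, (if i ≤ j ∧ i ≤ j' then
            (1 / ((i.factorial : ℝ) * (q * R) ^ i)) *
              ((-q) ^ j / (((n - j).factorial : ℝ) * (j - i).factorial)) *
              ((-q) ^ j' / (((n - j').factorial : ℝ) * (j' - i).factorial)) else 0)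
        = (1 / ((i.factorial : ℝ) * (q * R) ^ i)) *
            ((if i ≤ j then (-q) ^ j / (((n - j).factorial : ℝ) * (j - i).factorial) else 0) *
             (if i ≤ j' then (-q) ^ j' / (((n - j').factorial : ℝ) * (j' - i).factorial) else 0)) := by
      intro j j'
      by_cases h1 : i ≤ j <;> by_cases h2 : i ≤ j' <;> simp [h1, h2] <;> ring
    rw [Finset.sum_congr rfl (fun j _ => Finset.sum_congr rfl (fun j' _ => hpt j j'))]
    simp only [← Finset.mul_sum]
    rw [← Finset.sum_mul, G_sum (-q) n i hi]
    ring
  rw [Finset.sum_congr rfl step3]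
  rw [← Finset.sum_range_reflect]
  rw [Finset.mul_sum, Finset.mul_sum]
  apply Finset.sum_congr rfl
  intro k hk
  simp only [mem_range, Nat.lt_succ_iff] at hk
  obtain ⟨a, rfl⟩ : ∃ a, n = a + k := ⟨n - k, by omega⟩
  have h1 : a + k + 1 - 1 - k = a := by omega
  have h2 : a + k - a = k := by omega
  rw [h1, h2]
  have hchoose : ((a + k).choose k : ℝ) = (a + k).factorial / (k.factorial * a.factorial) := by
    rw [Nat.cast_choose ℝ (by omega : k ≤ a + k), Nat.add_sub_cancel]
  rw [hchoose]
  have hexp : Real.exp (-R) * Real.exp (q * R) = Real.exp ((q - 1) * R) := by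
    rw [← Real.exp_add]; congr 1; ring
  have hsq1 : (((-q : ℝ)) ^ a) ^ 2 = (q ^ a) ^ 2 := by
    rw [neg_pow q a, mul_pow, pow_right_comm]
    norm_num
  have f1 : (k.factorial : ℝ) ≠ 0 := by exact_mod_cast k.factorial_ne_zero
  have f2 : (a.factorial : ℝ) ≠ 0 := by exact_mod_cast a.factorial_ne_zero
  have f3 : ((a + k).factorial : ℝ) ≠ 0 := by exact_mod_cast (a + k).factorial_ne_zero
  rw [← hexp]
  rw [div_pow ((-q) ^ a * (1 + -q) ^ k), mul_pow ((-q) ^ a) ((1 + -q) ^ k), hsq1,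
    pow_right_comm (1 + -q) k 2, mul_pow R ((1 + -q) ^ 2 / q) k, div_pow]
  field_simp
  ring

/-! ### The `β = 0` case -/

lemma Dmat_zero (m n : ℕ) : Dmat 0 m n = if m = n then 1 else 0 := by
  unfold Dmat
  have h1 : Complex.exp (-(((‖(0 : ℂ)‖ : ℝ) : ℂ) ^ 2) / 2) = 1 := by
    simp
  rw [h1, one_mul]
  rw [Finset.sum_eq_single 0]
  · by_cases h : m = n
    · subst h
      rw [if_pos (by omega : m - 0 ≤ m)]
      have h2 : m - (m - 0) = 0 := by omega
      rw [h2]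
      have h3 : m - 0 = m := by omega
      rw [h3]
      have h4 : Real.sqrt ((m.factorial : ℝ) * m.factorial) = m.factorial :=
        Real.sqrt_mul_self (by positivity)
      rw [h4]
      have h5 : (m.factorial : ℝ) ≠ 0 := by exact_mod_cast m.factorial_ne_zero
      rw [if_pos rfl]
      simp [h5]
    · rw [if_neg h]
      by_cases hc : n - 0 ≤ m
      · rw [if_pos hc]
        have h2 : m - (n - 0) ≠ 0 := by omega
        simp [zero_pow h2]
        exact Or.inl (Or.inl (by omega))
      · rw [if_neg hc]
  · intro k _ hk0
    by_cases hc : n - k ≤ m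
    · rw [if_pos hc]
      simp [zero_pow hk0]
    · rw [if_neg hc]
  · intro h0
    simp at h0

lemma laguerre_zero (n : ℕ) : laguerre n 0 = 1 := by
  unfold laguerre
  rw [Finset.sum_eq_single 0]
  · simp
  · intro k _ hk0
    simp [zero_pow hk0]
  · intro h0
    simp at h0

end StmtAux

/-- For any β ∈ ℂ, μ ∈ ℝ, n ∈ ℕ:
∑_m e^{2μ(m−n)}|⟨m|D(β)|n⟩|² = e^{(e^{2μ}−1)|β|²}·L_n(−|β|²(e^μ − e^{−μ})²). -/
theorem stmt3 (β : ℂ) (μ : ℝ) (n : ℕ) :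
    ∑' m : ℕ, Real.exp (2 * μ * ((m : ℝ) - (n : ℝ))) * ‖Dmat β m n‖ ^ 2
      = Real.exp ((Real.exp (2 * μ) - 1) * ‖β‖ ^ 2) *
        laguerre n (-‖β‖ ^ 2 * (Real.exp μ - Real.exp (-μ)) ^ 2) := by
  classical
  open Finset StmtAux in
  by_cases hβ : β = 0
  · subst hβ
    have hsummand : ∀ m : ℕ,
        Real.exp (2 * μ * ((m : ℝ) - (n : ℝ))) * ‖Dmat 0 m n‖ ^ 2
          = if m = n then 1 else 0 := by
      intro m
      rw [StmtAux.Dmat_zero]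
      by_cases h : m = n
      · subst h; simp
      · simp [h]
    rw [tsum_congr hsummand, tsum_ite_eq]
    have h0 : ‖(0 : ℂ)‖ = 0 := norm_zero
    rw [h0]
    norm_num [StmtAux.laguerre_zero]
  · set R := ‖β‖ ^ 2 with hRdef
    set q := Real.exp (2 * μ) with hqdef
    have hR : 0 < R := by
      have : 0 < ‖β‖ := norm_pos_iff.mpr hβ
      positivity
    have hq : 0 < q := Real.exp_pos _
    have hsummand : ∀ m : ℕ,
        Real.exp (2 * μ * ((m : ℝ) - (n : ℝ))) * ‖Dmat β m n‖ ^ 2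
          = ∑ j ∈ Finset.range (n + 1), ∑ j' ∈ Finset.range (n + 1),
              StmtAux.Kc R q n j j' * StmtAux.Ft (q * R) j j' m :=
      fun m => StmtAux.summand_eq β hβ μ n m
    rw [tsum_congr hsummand]
    rw [Summable.tsum_finsetSum (fun j _ => summable_sum
      (fun j' _ => (StmtAux.summable_Ft (q * R) j j').mul_left _))]
    have hinner : ∀ j ∈ Finset.range (n + 1),
        ∑' m : ℕ, ∑ j' ∈ Finset.range (n + 1),
            StmtAux.Kc R q n j j' * StmtAux.Ft (q * R) j j' m
          = ∑ j' ∈ Finset.range (n + 1), StmtAux.Kc R q n j j' *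
              (Real.exp (q * R) * ∑ i ∈ Finset.range (min j j' + 1),
                ((j.factorial * j'.factorial : ℝ) /
                  (i.factorial * (j - i).factorial * (j' - i).factorial)) *
                  (q * R) ^ (j + j' - i)) := by
      intro j _
      rw [Summable.tsum_finsetSum (fun j' _ => (StmtAux.summable_Ft (q * R) j j').mul_left _)]
      exact Finset.sum_congr rfl fun j' _ => by rw [tsum_mul_left, StmtAux.tsum_Ft]
    rw [Finset.sum_congr rfl hinner, StmtAux.final_sum R q hR hq n]
    unfold laguerre
    congr 1
    have e3 : Real.exp μ = q * Real.exp (-μ) := by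
      rw [hqdef, ← Real.exp_add]; congr 1; ring
    have e4 : Real.exp (-μ) * Real.exp (-μ) * q = 1 := by
      rw [hqdef, ← Real.exp_add, ← Real.exp_add,
        show -μ + -μ + 2 * μ = (0 : ℝ) from by ring, Real.exp_zero]
    have hs : (Real.exp μ - Real.exp (-μ)) ^ 2 * q = (1 + -q) ^ 2 := by
      rw [e3]
      linear_combination (q - 1) ^ 2 * e4
    have hbase : R * ((1 + -q) ^ 2 / q) = -(-R * (Real.exp μ - Real.exp (-μ)) ^ 2) := by
      rw [← hs]
      field_simp
    rw [hbase]
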